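/- For any regular binary game and any stationary probability measure P on Σ^∞, the generalized entropy is monotone: H_{m+n} ≥ H_m for all natural numbers m, n ≥ 1, and moreover lim_{n→∞} H_{1|n} ≤ H_1, so the generalized entropy H = lim_{n→∞} H_n/n satisfies H ≤ H_1. -/
import Mathlib


open MeasureTheory ENNReal Filter Topology

noncomputable section

/-- A regular binary game `(Σ, Γ, λ)` with `Σ = {0,1}` (encoded as `Bool`, bit `0 = false`),
prediction space `Γ = [0,1]` and loss function `λ : Σ × [0,1] → [0,∞]` that is continuous,
convex in the prediction, and admits a prediction of finite loss on both outcomes. -/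
structure RegularGame where
  loss : Bool → ℝ → ℝ≥0∞
  continuousOn : ∀ b, ContinuousOn (loss b) (Set.Icc 0 1)
  convex : ∀ b : Bool, ∀ γ₁ ∈ Set.Icc (0:ℝ) 1, ∀ γ₂ ∈ Set.Icc (0:ℝ) 1,
      ∀ t ∈ Set.Icc (0:ℝ) 1,
      loss b (t * γ₁ + (1 - t) * γ₂)
        ≤ ENNReal.ofReal t * loss b γ₁ + ENNReal.ofReal (1 - t) * loss b γ₂
  finite_pred : ∃ γ ∈ Set.Icc (0:ℝ) 1, loss false γ < ⊤ ∧ loss true γ < ⊤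

/-- A prediction strategy: for each history length `i`, a map from `i`-bit histories
to predictions in `[0,1]`. -/
def Strategy : Type := (i : ℕ) → (Fin i → Bool) → Set.Icc (0:ℝ) 1

/-- Cumulative loss of a strategy on the finite string `w`. -/
def strategyLoss (G : RegularGame) {n : ℕ} (w : Fin n → Bool) (S : Strategy) : ℝ≥0∞ :=
  ∑ i : Fin n, G.loss (w i)
    ((S i.val (fun j : Fin i.val => w ⟨j.val, j.isLt.trans i.isLt⟩) : Set.Icc (0:ℝ) 1) : ℝ)

/-- Cylinder set of the finite string `w` in `Σ^∞`. -/
def cyl {n : ℕ} (w : Fin n → Bool) : Set (ℕ → Bool) := {ω | ∀ i : Fin n, ω i.val = w i}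

/-- The `n`-step generalized entropy `H_n = inf_℘ Σ_{w ∈ Σ^n} P(w)·Loss(w,℘)`. -/
def Hn (G : RegularGame) (P : Measure (ℕ → Bool)) (n : ℕ) : ℝ≥0∞ :=
  ⨅ S : Strategy, ∑ w : Fin n → Bool, P (cyl w) * strategyLoss G w S

/-- The generalized conditional entropy
`H_{n|m} = inf_℘ Σ_{w∈Σ^m, x∈Σ^n} P(w·x) · Σ_{i<n} λ(x_i, ℘^{m+i}(w·x_0⋯x_{i−1}))`. -/
def Hcond (G : RegularGame) (P : Measure (ℕ → Bool)) (n m : ℕ) : ℝ≥0∞ :=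
  ⨅ S : Strategy, ∑ w : Fin m → Bool, ∑ x : Fin n → Bool,
    P (cyl (Fin.append w x)) *
      ∑ i : Fin n, G.loss (x i)
        ((S (m + i.val)
          (Fin.append w (fun j : Fin i.val => x ⟨j.val, j.isLt.trans i.isLt⟩)) : Set.Icc (0:ℝ) 1) : ℝ)

/-- The left shift on one-sided sequences. -/
def shiftN : (ℕ → Bool) → (ℕ → Bool) := fun ω n => ω (n + 1)

lemma measurable_shiftN : Measurable shiftN :=
  measurable_pi_lambda _ fun _ => measurable_pi_apply _

lemma measurableSet_cyl {n : ℕ} (w : Fin n → Bool) : MeasurableSet (cyl w) := by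
  have h : cyl w = ⋂ i : Fin n, (fun ω : ℕ → Bool => ω i.val) ⁻¹' {w i} := by
    ext ω; simp [cyl, Set.mem_iInter]
  rw [h]
  exact MeasurableSet.iInter fun i => (measurable_pi_apply _) (measurableSet_singleton _)

lemma sum_measure_inter_cyl (P : Measure (ℕ → Bool)) (n : ℕ) {A : Set (ℕ → Bool)}
    (hA : MeasurableSet A) :
    ∑ w : Fin n → Bool, P (A ∩ cyl w) = P A := by
  have hdisj : Pairwise (Function.onFun Disjoint fun w : Fin n → Bool => A ∩ cyl w) := by
    intro w w' hww'
    refine Set.disjoint_left.2 ?_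
    rintro ω ⟨-, h1⟩ ⟨-, h2⟩
    exact hww' (funext fun i => (h1 i).symm.trans (h2 i))
  have hU : (⋃ w : Fin n → Bool, (A ∩ cyl w)) = A := by
    apply Set.Subset.antisymm
    · exact Set.iUnion_subset fun w => Set.inter_subset_left
    · intro ω hω
      exact Set.mem_iUnion.2 ⟨fun i => ω i.val, hω, fun i => rfl⟩
  calc ∑ w : Fin n → Bool, P (A ∩ cyl w)
      = ∑' w : Fin n → Bool, P (A ∩ cyl w) := (tsum_fintype _).symm
    _ = P (⋃ w : Fin n → Bool, (A ∩ cyl w)) :=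
        (measure_iUnion hdisj fun w => hA.inter (measurableSet_cyl w)).symm
    _ = P A := by rw [hU]

lemma preimage_iterate_eq (P : Measure (ℕ → Bool)) (hstat : P.map shiftN = P) (n : ℕ)
    {A : Set (ℕ → Bool)} (hA : MeasurableSet A) :
    P (shiftN^[n] ⁻¹' A) = P A := by
  induction n with
  | zero => rfl
  | succ k ih =>
    have h1 : shiftN^[k+1] ⁻¹' A = shiftN ⁻¹' (shiftN^[k] ⁻¹' A) := by
      rw [Function.iterate_succ, Set.preimage_comp]
    rw [h1, ← Measure.map_apply measurable_shiftN ((measurable_shiftN.iterate k) hA), hstat, ih]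

lemma shiftN_iterate_apply : ∀ (n k : ℕ) (ω : ℕ → Bool), shiftN^[n] ω k = ω (k + n)
  | 0, _, _ => rfl
  | (m+1), k, ω => by
    rw [Function.iterate_succ_apply, shiftN_iterate_apply m k (shiftN ω)]
    rfl

lemma mem_shift_cyl {x : Fin 1 → Bool} {n : ℕ} {ω : ℕ → Bool} :
    ω ∈ shiftN^[n] ⁻¹' cyl x ↔ ω n = x 0 := by
  constructor
  · intro h
    have := h (0 : Fin 1)
    simpa [shiftN_iterate_apply] using this
  · intro h i
    have hi : i = 0 := Fin.fin_one_eq_zero i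
    subst hi
    simpa [shiftN_iterate_apply] using h

lemma sum_cyl_filter (P : Measure (ℕ → Bool)) (hstat : P.map shiftN = P)
    {n : ℕ} (i : Fin n) (x : Fin 1 → Bool) :
    ∑ w : Fin n → Bool, (if w i = x 0 then P (cyl w) else 0) = P (cyl x) := by
  have hA : MeasurableSet (shiftN^[i.val] ⁻¹' cyl x) :=
    (measurable_shiftN.iterate _) (measurableSet_cyl x)
  have key : ∀ w : Fin n → Bool,
      (shiftN^[i.val] ⁻¹' cyl x) ∩ cyl w = if w i = x 0 then cyl w else ∅ := by
    intro w
    by_cases h : w i = x 0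
    · simp only [h, if_true]
      apply Set.Subset.antisymm Set.inter_subset_right
      intro ω hω
      exact ⟨mem_shift_cyl.2 ((hω i).trans h), hω⟩
    · simp only [h, if_false]
      apply Set.eq_empty_of_forall_notMem
      rintro ω ⟨h1, h2⟩
      exact h ((h2 i).symm.trans (mem_shift_cyl.1 h1))
  calc ∑ w : Fin n → Bool, (if w i = x 0 then P (cyl w) else 0)
      = ∑ w : Fin n → Bool, P ((shiftN^[i.val] ⁻¹' cyl x) ∩ cyl w) := by
        refine Finset.sum_congr rfl fun w _ => ?_
        rw [key w]
        split <;> simp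
    _ = P (shiftN^[i.val] ⁻¹' cyl x) := sum_measure_inter_cyl P n hA
    _ = P (cyl x) := preimage_iterate_eq P hstat _ (measurableSet_cyl x)

lemma sum_cyl_append (P : Measure (ℕ → Bool)) (hstat : P.map shiftN = P)
    (n : ℕ) (x : Fin 1 → Bool) :
    ∑ w : Fin n → Bool, P (cyl (Fin.append w x)) = P (cyl x) := by
  have key : ∀ w : Fin n → Bool,
      (shiftN^[n] ⁻¹' cyl x) ∩ cyl w = cyl (Fin.append w x) := by
    intro w
    ext ω
    constructor
    · rintro ⟨h1, h2⟩ i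
      refine Fin.addCases (motive := fun i => ω i.val = Fin.append w x i)
        (fun j => ?_) (fun j => ?_) i
      · show ω (Fin.castAdd 1 j).val = Fin.append w x (Fin.castAdd 1 j)
        rw [Fin.append_left]; exact h2 j
      · show ω (Fin.natAdd n j).val = Fin.append w x (Fin.natAdd n j)
        rw [Fin.append_right]
        have hj : j = 0 := Fin.fin_one_eq_zero j
        subst hj
        exact mem_shift_cyl.1 h1
    · intro h
      refine ⟨mem_shift_cyl.2 ?_, fun j => ?_⟩
      · have := h (Fin.natAdd n (0 : Fin 1))
        rw [Fin.append_right] at this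
        exact this
      · have := h (Fin.castAdd 1 j)
        rw [Fin.append_left] at this
        exact this
  calc ∑ w : Fin n → Bool, P (cyl (Fin.append w x))
      = ∑ w : Fin n → Bool, P ((shiftN^[n] ⁻¹' cyl x) ∩ cyl w) :=
        Finset.sum_congr rfl fun w _ => by rw [key w]
    _ = P (shiftN^[n] ⁻¹' cyl x) :=
        sum_measure_inter_cyl P n ((measurable_shiftN.iterate _) (measurableSet_cyl x))
    _ = P (cyl x) := preimage_iterate_eq P hstat _ (measurableSet_cyl x)

lemma sum_cyl_trunc (P : Measure (ℕ → Bool)) (m n : ℕ) (w : Fin m → Bool) :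
    ∑ u : Fin (m+n) → Bool,
      (if (fun i => u (Fin.castAdd n i)) = w then P (cyl u) else 0) = P (cyl w) := by
  have key : ∀ u : Fin (m+n) → Bool,
      cyl w ∩ cyl u = if (fun i => u (Fin.castAdd n i)) = w then cyl u else ∅ := by
    intro u
    by_cases h : (fun i => u (Fin.castAdd n i)) = w
    · simp only [h, if_true]
      apply Set.Subset.antisymm Set.inter_subset_right
      intro ω hω
      refine ⟨fun i => ?_, hω⟩
      rw [← congrFun h i]
      exact hω (Fin.castAdd n i)
    · simp only [h, if_false]
      apply Set.eq_empty_of_forall_notMem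
      rintro ω ⟨h1, h2⟩
      exact h (funext fun i => (h2 (Fin.castAdd n i)).symm.trans (h1 i))
  calc ∑ u : Fin (m+n) → Bool,
        (if (fun i => u (Fin.castAdd n i)) = w then P (cyl u) else 0)
      = ∑ u : Fin (m+n) → Bool, P (cyl w ∩ cyl u) := by
        refine Finset.sum_congr rfl fun u _ => ?_
        rw [key u]
        split <;> simp
    _ = P (cyl w) := sum_measure_inter_cyl P (m+n) (measurableSet_cyl w)

lemma strategyLoss_one (G : RegularGame) (S : Strategy) (x : Fin 1 → Bool) :
    strategyLoss G x S
      = G.loss (x 0) ((S 0 (fun j => j.elim0) : Set.Icc (0:ℝ) 1) : ℝ) := by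
  unfold strategyLoss
  rw [Fin.sum_univ_one]
  have h0 : (fun j : Fin ((0:Fin 1).val) => x ⟨j.val, j.isLt.trans (0:Fin 1).isLt⟩)
      = (fun j : Fin 0 => j.elim0) := funext fun j => j.elim0
  exact congrArg _ (congrArg _ (congrArg _ h0))

/-- **Monotonicity of generalized entropy and the bound `H ≤ H_1`.** For any regular
binary game and stationary probability measure `P`: `H_{m+n} ≥ H_m` for `m, n ≥ 1`;
the limit of the one-step conditional entropies `H_{1|n}` is at most `H_1`; and the
generalized entropy `H = lim_{n→∞} H_n / n` satisfies `H ≤ H_1`. -/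
theorem generalized_entropy_le_H1
    (G : RegularGame) (P : Measure (ℕ → Bool)) [IsProbabilityMeasure P]
    (hstat : P.map shiftN = P) :
    (∀ m n : ℕ, 1 ≤ m → 1 ≤ n → Hn G P m ≤ Hn G P (m + n))
    ∧ (∀ L : ℝ≥0∞, Tendsto (fun n : ℕ => Hcond G P 1 n) atTop (𝓝 L) → L ≤ Hn G P 1)
    ∧ (∀ H : ℝ≥0∞, Tendsto (fun n : ℕ => Hn G P n / (n : ℝ≥0∞)) atTop (𝓝 H) →
        H ≤ Hn G P 1) := by
  -- the common value bound: for any strategy `S`, with `γ₀` its first prediction,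
  -- `H_1`'s value at `S` equals `∑ x, P(cyl x) * loss (x 0) γ₀`.
  have hval1 : ∀ S : Strategy,
      ∑ w : Fin 1 → Bool, P (cyl w) * strategyLoss G w S
        = ∑ x : Fin 1 → Bool,
            P (cyl x) * G.loss (x 0) ((S 0 (fun j => j.elim0) : Set.Icc (0:ℝ) 1) : ℝ) :=
    fun S => Finset.sum_congr rfl fun x _ => by rw [strategyLoss_one]
  -- For fixed `i : Fin n`, regroup the sum over length-`n` strings by the `i`-th bit.
  have hgroup : ∀ (γ : ℝ) (n : ℕ) (i : Fin n),
      ∑ w : Fin n → Bool, P (cyl w) * G.loss (w i) γ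
        = ∑ x : Fin 1 → Bool, P (cyl x) * G.loss (x 0) γ := by
    intro γ n i
    calc ∑ w : Fin n → Bool, P (cyl w) * G.loss (w i) γ
        = ∑ w : Fin n → Bool, ∑ x : Fin 1 → Bool,
            (if w i = x 0 then P (cyl w) * G.loss (x 0) γ else 0) := by
          refine Finset.sum_congr rfl fun w _ => ?_
          rw [Fintype.sum_eq_single (fun _ : Fin 1 => w i)]
          · simp
          · intro x hx
            rw [if_neg]
            intro hc
            exact hx (funext fun j => by rw [Fin.fin_one_eq_zero j]; exact hc.symm)
      _ = ∑ x : Fin 1 → Bool, G.loss (x 0) γ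
            * ∑ w : Fin n → Bool, (if w i = x 0 then P (cyl w) else 0) := by
          rw [Finset.sum_comm]
          refine Finset.sum_congr rfl fun x _ => ?_
          rw [Finset.mul_sum]
          refine Finset.sum_congr rfl fun w _ => ?_
          rw [mul_ite, mul_zero, mul_comm]
      _ = ∑ x : Fin 1 → Bool, P (cyl x) * G.loss (x 0) γ := by
          refine Finset.sum_congr rfl fun x _ => ?_
          rw [sum_cyl_filter P hstat i x, mul_comm]
  refine ⟨?_, ?_, ?_⟩
  · -- Part 1 : `H_m ≤ H_{m+n}`
    intro m n _ _
    refine le_iInf fun S => ?_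
    refine le_trans (iInf_le _ S) ?_
    have step1 : ∀ u : Fin (m+n) → Bool,
        strategyLoss G (fun i => u (Fin.castAdd n i)) S ≤ strategyLoss G u S := by
      intro u
      unfold strategyLoss
      rw [Fin.sum_univ_add]
      exact le_self_add
    calc ∑ w : Fin m → Bool, P (cyl w) * strategyLoss G w S
        = ∑ w : Fin m → Bool,
            (∑ u : Fin (m+n) → Bool,
              if (fun i => u (Fin.castAdd n i)) = w then P (cyl u) else 0)
            * strategyLoss G w S := by
          refine Finset.sum_congr rfl fun w _ => ?_
          rw [sum_cyl_trunc P m n w]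
      _ = ∑ u : Fin (m+n) → Bool, ∑ w : Fin m → Bool,
            (if (fun i => u (Fin.castAdd n i)) = w
              then P (cyl u) * strategyLoss G w S else 0) := by
          rw [Finset.sum_comm]
          refine Finset.sum_congr rfl fun w _ => ?_
          rw [Finset.sum_mul]
          refine Finset.sum_congr rfl fun u _ => ?_
          rw [ite_mul, zero_mul]
      _ = ∑ u : Fin (m+n) → Bool,
            P (cyl u) * strategyLoss G (fun i => u (Fin.castAdd n i)) S := by
          refine Finset.sum_congr rfl fun u _ => ?_
          rw [Finset.sum_ite_eq]
          simp
      _ ≤ ∑ u : Fin (m+n) → Bool, P (cyl u) * strategyLoss G u S :=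
          Finset.sum_le_sum fun u _ => mul_le_mul_right (step1 u) _
  · -- Part 2 : `lim H_{1|n} ≤ H_1`
    intro L hL
    refine le_iInf fun S => ?_
    set γ₀ : Set.Icc (0:ℝ) 1 := S 0 (fun j => j.elim0) with hγ₀
    have hval : ∀ n : ℕ,
        Hcond G P 1 n ≤ ∑ x : Fin 1 → Bool, P (cyl x) * G.loss (x 0) ((γ₀ : ℝ)) := by
      intro n
      calc Hcond G P 1 n
          ≤ ∑ w : Fin n → Bool, ∑ x : Fin 1 → Bool,
              P (cyl (Fin.append w x)) * ∑ i : Fin 1, G.loss (x i) ((γ₀ : ℝ)) :=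
            iInf_le _ (fun _ _ => γ₀)
        _ = ∑ x : Fin 1 → Bool, P (cyl x) * G.loss (x 0) ((γ₀ : ℝ)) := by
            rw [Finset.sum_comm]
            refine Finset.sum_congr rfl fun x _ => ?_
            rw [← Finset.sum_mul, sum_cyl_append P hstat n x, Fin.sum_univ_one]
    refine le_of_tendsto hL (Eventually.of_forall fun n => le_trans (hval n) ?_)
    rw [hval1 S]
  · -- Part 3 : `H ≤ H_1`
    intro H hH
    refine le_iInf fun S => ?_
    set γ₀ : Set.Icc (0:ℝ) 1 := S 0 (fun j => j.elim0) with hγ₀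
    set V : ℝ≥0∞ := ∑ x : Fin 1 → Bool, P (cyl x) * G.loss (x 0) ((γ₀ : ℝ)) with hV
    have hbound : ∀ n : ℕ, Hn G P n ≤ n * V := by
      intro n
      calc Hn G P n
          ≤ ∑ w : Fin n → Bool, P (cyl w) * ∑ i : Fin n, G.loss (w i) ((γ₀ : ℝ)) :=
            iInf_le _ (fun _ _ => γ₀)
        _ = ∑ i : Fin n, ∑ w : Fin n → Bool, P (cyl w) * G.loss (w i) ((γ₀ : ℝ)) := by
            simp_rw [Finset.mul_sum]
            exact Finset.sum_comm
        _ = ∑ _i : Fin n, V := Finset.sum_congr rfl fun i _ => hgroup _ n i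
        _ = n * V := by
            rw [Finset.sum_const, Finset.card_univ, Fintype.card_fin, nsmul_eq_mul]
    have hdiv : ∀ n : ℕ, 1 ≤ n → Hn G P n / (n : ℝ≥0∞) ≤ V := by
      intro n hn
      have hn0 : (n : ℝ≥0∞) ≠ 0 := Nat.cast_ne_zero.2 (by omega)
      rw [ENNReal.div_le_iff_le_mul (Or.inl hn0) (Or.inl (ENNReal.natCast_ne_top n))]
      rw [mul_comm]
      exact hbound n
    have hHV : H ≤ V :=
      le_of_tendsto hH (eventually_atTop.2 ⟨1, fun n hn => hdiv n hn⟩)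
    refine le_trans hHV ?_
    rw [hval1 S]
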